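/- arXiv:2408.09349 — 4 statements merged into one kernel-verified Lean document; each statement's English description precedes it below -/
import Mathlib

section
/- Let (S, Σ, 𝒫) be a probability space, λ ∈ (0,1), and ψ: S → ℝ a bounded measurable function with inf_S ψ > 0. Then ( ∫_S ψ^λ d𝒫 )^{1/λ} = inf { ( ∫_S ψ dQ ) · ( ∫_S (dQ/d𝒫)^{λ/(λ−1)} d𝒫 )^{(1−λ)/λ} : Q a probability measure on (S,Σ) with Q ≪ 𝒫 }, with the convention that the product is +∞ whenever ∫_S (dQ/d𝒫)^{λ/(λ−1)} d𝒫 = +∞. The infimum is attained at the measure dQ* ∝ ψ^{λ−1} d𝒫. -/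
open MeasureTheory ProbabilityTheory Real

private lemma aux_integrable_of_bound {S : Type*} [MeasurableSpace S] (Q : Measure S)
    [IsFiniteMeasure Q] {f : S → ℝ} (hf : Measurable f) (K : ℝ) (hK : ∀ θ, |f θ| ≤ K) :
    Integrable f Q :=
  (integrable_const K).mono' hf.aestronglyMeasurable
    (ae_of_all _ fun θ => by simpa [Real.norm_eq_abs] using hK θ)

/-- dual representation of the power ambiguity function, `λ ∈ (0,1)`.
For a probability measure `P`, `λ ∈ (0,1)` and a bounded measurable `ψ` with
`inf ψ > 0`,
`(∫ ψ^λ dP)^{1/λ} = inf { (∫ ψ dQ)·(∫ (dQ/dP)^{λ/(λ−1)} dP)^{(1−λ)/λ} : Q prob., Q ≪ P }`,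
with the convention (built into `ℝ≥0∞` arithmetic) that the product is `+∞` whenever
`∫ (dQ/dP)^{λ/(λ−1)} dP = +∞`.  The infimum is attained at `dQ* ∝ ψ^{λ−1} dP`. -/
theorem stmt_8
    {S : Type*} [MeasurableSpace S] (P : Measure S) [IsProbabilityMeasure P]
    (l : ℝ) (hl0 : 0 < l) (hl1 : l < 1)
    (ψ : S → ℝ) (hψmeas : Measurable ψ) (hψbdd : ∃ M, ∀ θ, |ψ θ| ≤ M)
    (c : ℝ) (hc : 0 < c) (hcψ : ∀ θ, c ≤ ψ θ) :
    (ENNReal.ofReal ((∫ θ, ψ θ ^ l ∂P) ^ (1 / l))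
        = ⨅ Q : {Q : Measure S // IsProbabilityMeasure Q ∧ Q ≪ P},
            (ENNReal.ofReal (∫ θ, ψ θ ∂(Q : Measure S)) *
              (∫⁻ θ, ((Q : Measure S).rnDeriv P θ) ^ (l / (l - 1)) ∂P) ^ ((1 - l) / l))) ∧
      IsProbabilityMeasure
        (P.withDensity fun θ =>
          ENNReal.ofReal (ψ θ ^ (l - 1) / ∫ θ', ψ θ' ^ (l - 1) ∂P)) ∧
      (P.withDensity fun θ =>
          ENNReal.ofReal (ψ θ ^ (l - 1) / ∫ θ', ψ θ' ^ (l - 1) ∂P)) ≪ P ∧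
      ENNReal.ofReal
            (∫ θ, ψ θ ∂(P.withDensity fun θ =>
              ENNReal.ofReal (ψ θ ^ (l - 1) / ∫ θ', ψ θ' ^ (l - 1) ∂P))) *
          (∫⁻ θ, ((P.withDensity fun θ =>
              ENNReal.ofReal (ψ θ ^ (l - 1) / ∫ θ', ψ θ' ^ (l - 1) ∂P)).rnDeriv P θ)
                ^ (l / (l - 1)) ∂P) ^ ((1 - l) / l)
        = ENNReal.ofReal ((∫ θ, ψ θ ^ l ∂P) ^ (1 / l)) := by
  obtain ⟨M, hM⟩ := hψbdd
  have hS : Nonempty S := by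
    by_contra h
    rw [not_nonempty_iff] at h
    have h1 : P Set.univ = 1 := measure_univ
    rw [Set.univ_eq_empty_iff.mpr h, measure_empty] at h1
    exact zero_ne_one h1
  have hψpos : ∀ θ, 0 < ψ θ := fun θ => lt_of_lt_of_le hc (hcψ θ)
  have hψM : ∀ θ, ψ θ ≤ M := fun θ => (abs_le.1 (hM θ)).2
  have hM0 : 0 < M := lt_of_lt_of_le (hψpos hS.some) (hψM hS.some)
  have hl1' : l - 1 < 0 := by linarith
  have hlne : l - 1 ≠ 0 := hl1'.ne
  have hl1pos : 0 < 1 - l := by linarith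
  have hr_neg : l / (l - 1) < 0 := div_neg_of_pos_of_neg hl0 hl1'
  -- integrability of powers of ψ
  have hint : ∀ r : ℝ, Integrable (fun θ => ψ θ ^ r) P := by
    intro r
    refine aux_integrable_of_bound P (hψmeas.pow_const r) (max (c ^ r) (M ^ r)) fun θ => ?_
    rw [abs_of_nonneg (Real.rpow_nonneg (hψpos θ).le r)]
    rcases le_or_gt 0 r with hr | hr
    · exact le_max_of_le_right (Real.rpow_le_rpow (hψpos θ).le (hψM θ) hr)
    · exact le_max_of_le_left (Real.rpow_le_rpow_of_nonpos hc (hcψ θ) hr.le)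
  set D : ℝ := ∫ θ', ψ θ' ^ (l - 1) ∂P with hDdef
  set Ar : ℝ := ∫ θ, ψ θ ^ l ∂P with hArdef
  have hD_pos : 0 < D := by
    have h1 : (M : ℝ) ^ (l - 1) ≤ D := by
      rw [hDdef]
      calc M ^ (l - 1) = ∫ _, M ^ (l - 1) ∂P := by simp
        _ ≤ _ := integral_mono (integrable_const _) (hint _) fun θ =>
            Real.rpow_le_rpow_of_nonpos (hψpos θ) (hψM θ) hl1'.le
    exact lt_of_lt_of_le (Real.rpow_pos_of_pos hM0 _) h1
  have hAr_pos : 0 < Ar := by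
    have h1 : (c : ℝ) ^ l ≤ Ar := by
      rw [hArdef]
      calc c ^ l = ∫ _, c ^ l ∂P := by simp
        _ ≤ _ := integral_mono (integrable_const _) (hint _) fun θ =>
            Real.rpow_le_rpow hc.le (hcψ θ) hl0.le
    exact lt_of_lt_of_le (Real.rpow_pos_of_pos hc _) h1
  set f : S → ENNReal := fun θ => ENNReal.ofReal (ψ θ ^ (l - 1) / D) with hfdef
  have hfmeas : Measurable f := ((hψmeas.pow_const (l - 1)).div_const D).ennreal_ofReal
  have hf_nonneg : ∀ θ, 0 ≤ ψ θ ^ (l - 1) / D := fun θ =>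
    div_nonneg (Real.rpow_nonneg (hψpos θ).le _) hD_pos.le
  -- probability
  have hf1 : ∫⁻ θ, f θ ∂P = 1 := by
    rw [hfdef]
    rw [← ofReal_integral_eq_lintegral_ofReal ((hint (l - 1)).div_const D)
      (ae_of_all _ hf_nonneg)]
    rw [integral_div, ← hDdef, div_self hD_pos.ne', ENNReal.ofReal_one]
  have hQprob : IsProbabilityMeasure (P.withDensity f) :=
    ⟨by rw [withDensity_apply _ MeasurableSet.univ, setLIntegral_univ, hf1]⟩
  have hQac : P.withDensity f ≪ P := withDensity_absolutelyContinuous _ _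
  haveI := hQprob
  -- value at the optimizer
  have hrn : (P.withDensity f).rnDeriv P =ᵐ[P] f := Measure.rnDeriv_withDensity P hfmeas
  have hBstar : ∫⁻ θ, ((P.withDensity f).rnDeriv P θ) ^ (l / (l - 1)) ∂P
      = ENNReal.ofReal (Ar * D ^ (-(l / (l - 1)))) := by
    have h1 : ∫⁻ θ, ((P.withDensity f).rnDeriv P θ) ^ (l / (l - 1)) ∂P
        = ∫⁻ θ, (f θ) ^ (l / (l - 1)) ∂P :=
      lintegral_congr_ae (hrn.mono fun θ h => by dsimp only; rw [h])
    have hident : ∀ θ, (ψ θ ^ (l - 1) / D) ^ (l / (l - 1))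
        = ψ θ ^ l * D ^ (-(l / (l - 1))) := by
      intro θ
      rw [Real.div_rpow (Real.rpow_nonneg (hψpos θ).le _) hD_pos.le,
        ← Real.rpow_mul (hψpos θ).le]
      rw [show (l - 1) * (l / (l - 1)) = l by field_simp]
      rw [div_eq_mul_inv, ← Real.rpow_neg hD_pos.le]
    have h2 : ∫⁻ θ, (f θ) ^ (l / (l - 1)) ∂P
        = ∫⁻ θ, ENNReal.ofReal (ψ θ ^ l * D ^ (-(l / (l - 1)))) ∂P := by
      refine lintegral_congr fun θ => ?_
      rw [hfdef]
      rw [ENNReal.ofReal_rpow_of_pos (div_pos (Real.rpow_pos_of_pos (hψpos θ) _) hD_pos)]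
      rw [hident θ]
    rw [h1, h2, ← ofReal_integral_eq_lintegral_ofReal ((hint l).mul_const _)
      (ae_of_all _ fun θ => mul_nonneg (Real.rpow_nonneg (hψpos θ).le _)
        (Real.rpow_nonneg hD_pos.le _))]
    rw [integral_mul_const, ← hArdef]
  have hXstar : ENNReal.ofReal (∫ θ, ψ θ ∂(P.withDensity f)) = ENNReal.ofReal (Ar / D) := by
    rw [ofReal_integral_eq_lintegral_ofReal
      (aux_integrable_of_bound (P.withDensity f) hψmeas M hM)
      (ae_of_all _ fun θ => (hψpos θ).le)]
    rw [lintegral_withDensity_eq_lintegral_mul P hfmeas hψmeas.ennreal_ofReal]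
    have h3 : ∀ θ, f θ * ENNReal.ofReal (ψ θ) = ENNReal.ofReal (ψ θ ^ l / D) := by
      intro θ
      rw [hfdef, ← ENNReal.ofReal_mul (hf_nonneg θ)]
      congr 1
      rw [div_mul_eq_mul_div]
      congr 1
      rw [← Real.rpow_add_one (hψpos θ).ne' (l - 1), sub_add_cancel]
    calc ∫⁻ θ, (f * fun θ => ENNReal.ofReal (ψ θ)) θ ∂P
        = ∫⁻ θ, ENNReal.ofReal (ψ θ ^ l / D) ∂P := lintegral_congr fun θ => h3 θ
      _ = ENNReal.ofReal (Ar / D) := by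
          rw [← ofReal_integral_eq_lintegral_ofReal ((hint l).div_const D)
            (ae_of_all _ fun θ => div_nonneg (Real.rpow_nonneg (hψpos θ).le _) hD_pos.le)]
          rw [integral_div, ← hArdef]
  have hAttain : ENNReal.ofReal (∫ θ, ψ θ ∂(P.withDensity f)) *
      (∫⁻ θ, ((P.withDensity f).rnDeriv P θ) ^ (l / (l - 1)) ∂P) ^ ((1 - l) / l)
      = ENNReal.ofReal (Ar ^ (1 / l)) := by
    rw [hXstar, hBstar]
    rw [ENNReal.ofReal_rpow_of_pos (mul_pos hAr_pos (Real.rpow_pos_of_pos hD_pos _))]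
    rw [← ENNReal.ofReal_mul (div_nonneg hAr_pos.le hD_pos.le)]
    congr 1
    rw [Real.mul_rpow hAr_pos.le (Real.rpow_nonneg hD_pos.le _), ← Real.rpow_mul hD_pos.le]
    rw [show -(l / (l - 1)) * ((1 - l) / l) = 1 by field_simp; ring, Real.rpow_one]
    have h4 : Ar / D * (Ar ^ ((1 - l) / l) * D) = Ar ^ (1 : ℝ) * Ar ^ ((1 - l) / l) := by
      rw [Real.rpow_one]
      field_simp
    rw [h4, ← Real.rpow_add hAr_pos]
    congr 1
    field_simp
    ring
  -- the lower bound for an arbitrary Q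
  have hAlint : ENNReal.ofReal Ar = ∫⁻ θ, ENNReal.ofReal (ψ θ) ^ l ∂P := by
    rw [hArdef, ofReal_integral_eq_lintegral_ofReal (hint l)
      (ae_of_all _ fun θ => Real.rpow_nonneg (hψpos θ).le _)]
    exact lintegral_congr fun θ => (ENNReal.ofReal_rpow_of_pos (hψpos θ)).symm
  have hLHS : ENNReal.ofReal (Ar ^ (1 / l)) = (ENNReal.ofReal Ar) ^ (1 / l) :=
    (ENNReal.ofReal_rpow_of_pos hAr_pos).symm
  have hlow : ∀ (Q : Measure S), IsProbabilityMeasure Q → Q ≪ P →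
      (ENNReal.ofReal Ar) ^ (1 / l) ≤ ENNReal.ofReal (∫ θ, ψ θ ∂Q) *
        (∫⁻ θ, (Q.rnDeriv P θ) ^ (l / (l - 1)) ∂P) ^ ((1 - l) / l) := by
    intro Q hQp hQac'
    haveI := hQp
    set g : S → ENNReal := Q.rnDeriv P with hgdef
    have hgmeas : Measurable g := Measure.measurable_rnDeriv Q P
    set B : ENNReal := ∫⁻ θ, g θ ^ (l / (l - 1)) ∂P with hBdef
    set X : ENNReal := ENNReal.ofReal (∫ θ, ψ θ ∂Q) with hXdef
    have hψintQ : Integrable ψ Q := aux_integrable_of_bound Q hψmeas M hM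
    have hXc : ENNReal.ofReal c ≤ X := by
      rw [hXdef]
      apply ENNReal.ofReal_le_ofReal
      calc c = ∫ _, c ∂Q := by simp
        _ ≤ _ := integral_mono (integrable_const _) hψintQ hcψ
    have hX0 : X ≠ 0 := by
      intro h
      rw [h] at hXc
      exact (ENNReal.ofReal_pos.2 hc).ne' (le_antisymm hXc zero_le)
    by_cases hB_top : B = ⊤
    · rw [hB_top, ENNReal.top_rpow_of_pos (div_pos hl1pos hl0), ENNReal.mul_top hX0]
      exact le_top
    -- g ≠ 0 a.e.
    have hg0 : ∀ᵐ θ ∂P, g θ ≠ 0 := by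
      filter_upwards [ae_lt_top (hgmeas.pow_const (l / (l - 1))) hB_top] with θ h
      intro h0
      rw [h0, ENNReal.zero_rpow_of_neg hr_neg] at h
      exact absurd h (lt_irrefl _)
    have hgtop : ∀ᵐ θ ∂P, g θ ≠ ⊤ := (Measure.rnDeriv_lt_top Q P).mono fun θ h => h.ne
    have hpq : Real.HolderConjugate (1 / l) (1 / (1 - l)) := by
      rw [Real.holderConjugate_iff]
      constructor
      · rw [lt_div_iff₀ hl0]; linarith
      · simp only [one_div, inv_inv]; ring
    set φ : S → ENNReal := fun θ => (ENNReal.ofReal (ψ θ) * g θ) ^ l with hφdef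
    set γ : S → ENNReal := fun θ => g θ ^ (-l) with hγdef
    have holder : ∫⁻ θ, (φ * γ) θ ∂P ≤ (∫⁻ θ, φ θ ^ (1 / l) ∂P) ^ (1 / (1 / l)) *
        (∫⁻ θ, γ θ ^ (1 / (1 - l)) ∂P) ^ (1 / (1 / (1 - l))) := ENNReal.lintegral_mul_le_Lp_mul_Lq P hpq
      (((hψmeas.ennreal_ofReal.mul hgmeas).pow_const l).aemeasurable)
      ((hgmeas.pow_const (-l)).aemeasurable)
    -- lhs of Hölder
    have hlhs : ∫⁻ θ, (φ * γ) θ ∂P = ENNReal.ofReal Ar := by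
      rw [hAlint]
      refine lintegral_congr_ae ?_
      filter_upwards [hg0, hgtop] with θ h0 ht
      show (ENNReal.ofReal (ψ θ) * g θ) ^ l * g θ ^ (-l) = ENNReal.ofReal (ψ θ) ^ l
      rw [ENNReal.mul_rpow_of_nonneg _ _ hl0.le, mul_assoc,
        ← ENNReal.rpow_add l (-l) h0 ht,
        show l + (-l) = 0 by ring, ENNReal.rpow_zero, mul_one]
    -- first factor
    have hfac1 : ∫⁻ θ, φ θ ^ (1 / l) ∂P = X := by
      have h5 : ∀ θ, φ θ ^ (1 / l) = ENNReal.ofReal (ψ θ) * g θ := by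
        intro θ
        rw [hφdef, ← ENNReal.rpow_mul, mul_one_div_cancel hl0.ne', ENNReal.rpow_one]
      have h6 : ∫⁻ θ, ENNReal.ofReal (ψ θ) * g θ ∂P = ∫⁻ θ, ENNReal.ofReal (ψ θ) ∂Q := by
        conv_rhs => rw [← Measure.withDensity_rnDeriv_eq Q P hQac']
        rw [lintegral_withDensity_eq_lintegral_mul P hgmeas hψmeas.ennreal_ofReal]
        exact lintegral_congr fun θ => (mul_comm _ _)
      rw [lintegral_congr h5, h6, hXdef,
        ofReal_integral_eq_lintegral_ofReal hψintQ (ae_of_all _ fun θ => (hψpos θ).le)]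
    -- second factor
    have hfac2 : ∫⁻ θ, γ θ ^ (1 / (1 - l)) ∂P = B := by
      rw [hBdef]
      refine lintegral_congr fun θ => ?_
      rw [hγdef]
      show (g θ ^ (-l)) ^ (1 / (1 - l)) = g θ ^ (l / (l - 1))
      rw [← ENNReal.rpow_mul]
      congr 1
      field_simp
      ring
    rw [hlhs, hfac1, hfac2, one_div_one_div, one_div_one_div] at holder
    -- holder : ENNReal.ofReal Ar ≤ X ^ l * B ^ (1 - l)
    have hmono := ENNReal.rpow_le_rpow holder (le_of_lt (by positivity : (0:ℝ) < 1 / l))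
    rw [ENNReal.mul_rpow_of_nonneg _ _ (by positivity : (0:ℝ) ≤ 1 / l),
      ← ENNReal.rpow_mul, ← ENNReal.rpow_mul,
      mul_one_div_cancel hl0.ne', ENNReal.rpow_one] at hmono
    rw [show (1 - l) * (1 / l) = (1 - l) / l by ring] at hmono
    exact hmono
  -- assemble
  have hiInf : ENNReal.ofReal (Ar ^ (1 / l))
      = ⨅ Q : {Q : Measure S // IsProbabilityMeasure Q ∧ Q ≪ P},
          (ENNReal.ofReal (∫ θ, ψ θ ∂(Q : Measure S)) *
            (∫⁻ θ, ((Q : Measure S).rnDeriv P θ) ^ (l / (l - 1)) ∂P) ^ ((1 - l) / l)) := by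
    apply le_antisymm
    · refine le_iInf fun Q => ?_
      rw [hLHS]
      exact hlow Q.1 Q.2.1 Q.2.2
    · exact iInf_le_of_le ⟨P.withDensity f, hQprob, hQac⟩ (le_of_eq hAttain)
  exact ⟨hiInf, hQprob, hQac, hAttain⟩
end

section
/- Let (S, Σ, 𝒫) be a probability space, λ < 0, and ψ: S → ℝ a bounded measurable function with inf_S ψ > 0. Then ( ∫_S ψ^λ d𝒫 )^{1/λ} = inf { ( ∫_S ψ dQ ) · ( ∫_S (dQ/d𝒫)^{λ/(λ−1)} d𝒫 )^{(1−λ)/λ} : Q a probability measure on (S,Σ) with Q ≪ 𝒫 }. The infimum is attained at the measure dQ* ∝ ψ^{λ−1} d𝒫. -/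
open MeasureTheory ProbabilityTheory Real
open scoped ENNReal

private lemma stmt9_rpow_le {c M x a : ℝ} (hc : 0 < c) (hcx : c ≤ x) (hxM : x ≤ M) :
    x ^ a ≤ max (c ^ a) (M ^ a) := by
  rcases le_or_gt 0 a with h | h
  · exact le_max_of_le_right (Real.rpow_le_rpow (hc.le.trans hcx) hxM h)
  · exact le_max_of_le_left (Real.rpow_le_rpow_of_nonpos hc hcx h.le)

private lemma stmt9_le_rpow {c M x a : ℝ} (hc : 0 < c) (hcx : c ≤ x) (hxM : x ≤ M) :
    min (c ^ a) (M ^ a) ≤ x ^ a := by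
  rcases le_or_gt 0 a with h | h
  · exact min_le_of_left_le (Real.rpow_le_rpow hc.le hcx h)
  · exact min_le_of_right_le (Real.rpow_le_rpow_of_nonpos (hc.trans_le hcx) hxM h.le)

private lemma stmt9_integrable {S : Type*} [MeasurableSpace S] {P : Measure S}
    [IsFiniteMeasure P] {ψ : S → ℝ} (hψ : Measurable ψ) {c M : ℝ} (hc : 0 < c)
    (hcψ : ∀ θ, c ≤ ψ θ) (hψM : ∀ θ, ψ θ ≤ M) (a : ℝ) :
    Integrable (fun θ => ψ θ ^ a) P := by
  refine (integrable_const (max (c ^ a) (M ^ a))).mono'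
    ((hψ.pow measurable_const).aestronglyMeasurable) (ae_of_all _ fun θ => ?_)
  rw [Real.norm_eq_abs, abs_of_nonneg (Real.rpow_nonneg (hc.le.trans (hcψ θ)) a)]
  exact stmt9_rpow_le hc (hcψ θ) (hψM θ)

private lemma stmt9_pos {S : Type*} [MeasurableSpace S] {P : Measure S}
    [IsProbabilityMeasure P] {ψ : S → ℝ} (hψ : Measurable ψ) {c M : ℝ} (hc : 0 < c)
    (hcM : c ≤ M) (hcψ : ∀ θ, c ≤ ψ θ) (hψM : ∀ θ, ψ θ ≤ M) (a : ℝ) :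
    0 < ∫ θ, ψ θ ^ a ∂P := by
  have h1 : (0 : ℝ) < min (c ^ a) (M ^ a) :=
    lt_min (Real.rpow_pos_of_pos hc a) (Real.rpow_pos_of_pos (hc.trans_le hcM) a)
  have h2 := integral_mono (μ := P) (integrable_const (min (c ^ a) (M ^ a)))
    (stmt9_integrable hψ hc hcψ hψM a) (fun θ => stmt9_le_rpow hc (hcψ θ) (hψM θ))
  rw [integral_const] at h2
  simp only [measure_univ, ENNReal.toReal_one, one_smul, probReal_univ] at h2
  exact h1.trans_le h2

private lemma stmt9_lint {S : Type*} [MeasurableSpace S] {P : Measure S}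
    {h : S → ℝ} (hint : Integrable h P) (hpos : ∀ θ, 0 ≤ h θ) :
    ∫⁻ θ, ENNReal.ofReal (h θ) ∂P = ENNReal.ofReal (∫ θ, h θ ∂P) :=
  (MeasureTheory.ofReal_integral_eq_lintegral_ofReal hint (ae_of_all _ hpos)).symm

private lemma stmt9_key {S : Type*} [MeasurableSpace S] (P : Measure S) [IsProbabilityMeasure P]
    {l : ℝ} (hl : l < 0) {ψ : S → ℝ} (hψmeas : Measurable ψ) {c M : ℝ} (hc : 0 < c)
    (hcM : c ≤ M) (hcψ : ∀ θ, c ≤ ψ θ) (hψM : ∀ θ, ψ θ ≤ M)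
    (Q : Measure S) (hQ : IsProbabilityMeasure Q) (hQP : Q ≪ P) :
    ENNReal.ofReal ((∫ θ, ψ θ ^ l ∂P) ^ (1 / l))
      ≤ ENNReal.ofReal (∫ θ, ψ θ ∂Q) *
        (∫⁻ θ, (Q.rnDeriv P θ) ^ (l / (l - 1)) ∂P) ^ ((1 - l) / l) := by
  have hl0 : l ≠ 0 := hl.ne
  have hl1 : l - 1 < 0 := by linarith
  have hl1' : l - 1 ≠ 0 := hl1.ne
  set p := l / (l - 1) with hp_def
  have hp0 : 0 < p := div_pos_of_neg_of_neg hl hl1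
  have hp_lt : p < 1 := (div_lt_one_of_neg hl1).mpr (by linarith)
  have hψpos : ∀ θ, 0 < ψ θ := fun θ => hc.trans_le (hcψ θ)
  set Ψ : S → ℝ≥0∞ := fun θ => ENNReal.ofReal (ψ θ) with hΨdef
  have hΨmeas : Measurable Ψ := hψmeas.ennreal_ofReal
  have hΨ0 : ∀ θ, Ψ θ ≠ 0 := fun θ => (ENNReal.ofReal_pos.mpr (hψpos θ)).ne'
  have hΨtop : ∀ θ, Ψ θ ≠ ⊤ := fun θ => ENNReal.ofReal_ne_top
  set f := Q.rnDeriv P with hfdef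
  have hfmeas : Measurable f := Measure.measurable_rnDeriv Q P
  have hf1 : ∫⁻ θ, f θ ∂P = 1 := by
    rw [hfdef, Measure.lintegral_rnDeriv hQP, measure_univ]
  set A := ∫⁻ θ, f θ ^ p ∂P with hAdef
  set B := ∫⁻ θ, f θ * Ψ θ ∂P with hBdef
  set C := ∫⁻ θ, Ψ θ ^ l ∂P with hCdef
  have hIint : Integrable (fun θ => ψ θ ^ l) P := stmt9_integrable hψmeas hc hcψ hψM l
  have hIpos : 0 < ∫ θ, ψ θ ^ l ∂P := stmt9_pos hψmeas hc hcM hcψ hψM l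
  have hC : C = ENNReal.ofReal (∫ θ, ψ θ ^ l ∂P) := by
    rw [hCdef, ← stmt9_lint hIint (fun θ => (Real.rpow_pos_of_pos (hψpos θ) l).le)]
    exact lintegral_congr fun θ => ENNReal.ofReal_rpow_of_pos (hψpos θ)
  have hC0 : C ≠ 0 := by rw [hC]; exact (ENNReal.ofReal_pos.mpr hIpos).ne'
  have hCtop : C ≠ ⊤ := by rw [hC]; exact ENNReal.ofReal_ne_top
  -- B equals the Bochner integral
  have hψQint : Integrable ψ Q :=
    (integrable_const M).mono' hψmeas.aestronglyMeasurable
      (ae_of_all _ fun θ => by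
        rw [Real.norm_eq_abs, abs_of_pos (hψpos θ)]; exact hψM θ)
  have hB : B = ENNReal.ofReal (∫ θ, ψ θ ∂Q) := by
    rw [hBdef, MeasureTheory.lintegral_rnDeriv_mul hQP hΨmeas.aemeasurable]
    exact (MeasureTheory.ofReal_integral_eq_lintegral_ofReal hψQint
      (ae_of_all _ fun θ => (hψpos θ).le)).symm
  -- A is finite and nonzero
  have hAtop : A ≠ ⊤ := by
    have hle : A ≤ ∫⁻ θ, (1 + f θ) ∂P := by
      refine lintegral_mono fun θ => ?_
      rcases le_total (f θ) 1 with h | h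
      · exact (ENNReal.rpow_le_one h hp0.le).trans (le_add_right le_rfl)
      · calc f θ ^ p ≤ f θ ^ (1 : ℝ) :=
              ENNReal.rpow_le_rpow_of_exponent_le h hp_lt.le
          _ = f θ := ENNReal.rpow_one _
          _ ≤ 1 + f θ := le_add_self
    have : ∫⁻ θ, (1 + f θ) ∂P = 1 + 1 := by
      rw [lintegral_add_left measurable_const, hf1, lintegral_const, measure_univ, mul_one]
    exact ne_top_of_le_ne_top (by simp : (1 + 1 : ℝ≥0∞) ≠ ⊤) (this ▸ hle)
  have hA0 : A ≠ 0 := by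
    intro h0
    rw [hAdef, lintegral_eq_zero_iff (hfmeas.pow measurable_const)] at h0
    have : ∫⁻ θ, f θ ∂P = 0 := by
      rw [← lintegral_zero (μ := P)]
      refine lintegral_congr_ae (h0.mono fun θ hθ => ?_)
      rcases (ENNReal.rpow_eq_zero_iff.mp hθ) with ⟨h1, _⟩ | ⟨_, h2⟩
      · exact h1
      · exact absurd h2 (not_lt.mpr hp0.le)
    rw [hf1] at this
    exact one_ne_zero this
  -- Hoelder
  have h1l' : (1 : ℝ) - l ≠ 0 := (by linarith : (0:ℝ) < 1 - l).ne'
  have hconj : ((l - 1) / l).HolderConjugate (1 - l) := by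
    rw [Real.holderConjugate_iff]
    constructor
    · have h1 : (l - 1) / l = 1 - 1 / l := by field_simp [hl0]
      have h2 : 1 / l < 0 := one_div_neg.mpr hl
      linarith
    · rw [inv_div, inv_eq_one_div, div_add_div _ _ hl1' h1l']
      rw [div_eq_one_iff_eq (by intro h; apply hl0; nlinarith [mul_self_nonneg (l-1)] : (l - 1) * (1 - l) ≠ 0)]
      ring
  have holder := ENNReal.lintegral_mul_le_Lp_mul_Lq P hconj
    (((hfmeas.mul hΨmeas).pow measurable_const).aemeasurable)
    ((hΨmeas.pow measurable_const).aemeasurable)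
    (f := fun θ => (f θ * Ψ θ) ^ p) (g := fun θ => Ψ θ ^ (-p))
  -- simplify the three integrands
  have e1 : ∫⁻ θ, ((fun θ => (f θ * Ψ θ) ^ p) * fun θ => Ψ θ ^ (-p)) θ ∂P = A := by
    rw [hAdef]
    refine lintegral_congr fun θ => ?_
    simp only [Pi.mul_apply]
    rw [ENNReal.mul_rpow_of_nonneg _ _ hp0.le, mul_assoc,
      ← ENNReal.rpow_add _ _ (hΨ0 θ) (hΨtop θ), add_neg_cancel, ENNReal.rpow_zero, mul_one]
  have e2 : ∫⁻ θ, ((f θ * Ψ θ) ^ p) ^ ((l - 1) / l) ∂P = B := by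
    rw [hBdef]
    refine lintegral_congr fun θ => ?_
    rw [← ENNReal.rpow_mul]
    have : p * ((l - 1) / l) = 1 := by rw [hp_def]; field_simp [hl0, hl1']
    rw [this, ENNReal.rpow_one]
  have e3 : ∫⁻ θ, (Ψ θ ^ (-p)) ^ (1 - l) ∂P = C := by
    rw [hCdef]
    refine lintegral_congr fun θ => ?_
    rw [← ENNReal.rpow_mul]
    congr 1
    have h : -p * (1 - l) = p * (l - 1) := by ring
    rw [h, hp_def, div_mul_cancel₀ _ hl1']
  rw [e1, e2, e3] at holder
  -- holder : A ≤ B ^ (1/((l-1)/l)) * C ^ (1/(1-l))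
  have h1r : 1 / ((l - 1) / l) = p := one_div_div _ _
  rw [h1r] at holder
  -- raise to power (l-1)/l
  set r := (l - 1) / l with hrdef
  have hr0 : 0 < r := div_pos_of_neg_of_neg hl1 hl
  have step2 : A ^ r ≤ B * C ^ (-(1 / l)) := by
    calc A ^ r ≤ (B ^ p * C ^ (1 / (1 - l))) ^ r := ENNReal.rpow_le_rpow holder hr0.le
      _ = (B ^ p) ^ r * (C ^ (1 / (1 - l))) ^ r := ENNReal.mul_rpow_of_nonneg _ _ hr0.le
      _ = B * C ^ (-(1 / l)) := by
          rw [← ENNReal.rpow_mul, ← ENNReal.rpow_mul]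
          have hpr : p * r = 1 := by
            rw [hrdef, hp_def]; field_simp [hl0, hl1']
          have hcr : 1 / (1 - l) * r = -(1 / l) := by
            rw [hrdef]; field_simp [hl0, h1l']; ring
          rw [hpr, hcr, ENNReal.rpow_one]
  have step3 : C ^ (1 / l) * A ^ r ≤ B := by
    calc C ^ (1 / l) * A ^ r ≤ C ^ (1 / l) * (B * C ^ (-(1 / l))) :=
          mul_le_mul_right step2 _
      _ = B * (C ^ (1 / l) * C ^ (-(1 / l))) := by ring
      _ = B := by
          rw [← ENNReal.rpow_add _ _ hC0 hCtop, add_neg_cancel, ENNReal.rpow_zero, mul_one]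
  have hAr0 : A ^ r ≠ 0 := by
    simp only [ne_eq, ENNReal.rpow_eq_zero_iff, not_or]
    exact ⟨fun h => hA0 h.1, fun h => hAtop h.1⟩
  have hArtop : A ^ r ≠ ⊤ := by
    simp only [ne_eq, ENNReal.rpow_eq_top_iff, not_or]
    exact ⟨fun h => hA0 h.1, fun h => hAtop h.1⟩
  have hfinal : C ^ (1 / l) ≤ B * A ^ ((1 - l) / l) := by
    have hnegr : (1 - l) / l = -r := by rw [hrdef]; ring
    rw [hnegr, ENNReal.rpow_neg]
    rw [← mul_one (C ^ (1 / l)), ← ENNReal.mul_inv_cancel hAr0 hArtop, ← mul_assoc]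
    exact mul_le_mul_left step3 _
  -- convert LHS
  have hLHS : ENNReal.ofReal ((∫ θ, ψ θ ^ l ∂P) ^ (1 / l)) = C ^ (1 / l) := by
    rw [hC, ENNReal.ofReal_rpow_of_pos hIpos]
  rw [hLHS, ← hB]
  exact hfinal

/-- dual representation of the power ambiguity function, `λ < 0`.
For a probability measure `P`, `λ < 0` and a bounded measurable `ψ` with
`inf ψ > 0`,
`(∫ ψ^λ dP)^{1/λ} = inf { (∫ ψ dQ)·(∫ (dQ/dP)^{λ/(λ−1)} dP)^{(1−λ)/λ} : Q prob., Q ≪ P }`.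
The infimum is attained at `dQ* ∝ ψ^{λ−1} dP`. -/
theorem stmt_9
    {S : Type*} [MeasurableSpace S] (P : Measure S) [IsProbabilityMeasure P]
    (l : ℝ) (hl : l < 0)
    (ψ : S → ℝ) (hψmeas : Measurable ψ) (hψbdd : ∃ M, ∀ θ, |ψ θ| ≤ M)
    (c : ℝ) (hc : 0 < c) (hcψ : ∀ θ, c ≤ ψ θ) :
    (ENNReal.ofReal ((∫ θ, ψ θ ^ l ∂P) ^ (1 / l))
        = ⨅ Q : {Q : Measure S // IsProbabilityMeasure Q ∧ Q ≪ P},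
            (ENNReal.ofReal (∫ θ, ψ θ ∂(Q : Measure S)) *
              (∫⁻ θ, ((Q : Measure S).rnDeriv P θ) ^ (l / (l - 1)) ∂P) ^ ((1 - l) / l))) ∧
      IsProbabilityMeasure
        (P.withDensity fun θ =>
          ENNReal.ofReal (ψ θ ^ (l - 1) / ∫ θ', ψ θ' ^ (l - 1) ∂P)) ∧
      (P.withDensity fun θ =>
          ENNReal.ofReal (ψ θ ^ (l - 1) / ∫ θ', ψ θ' ^ (l - 1) ∂P)) ≪ P ∧
      ENNReal.ofReal
            (∫ θ, ψ θ ∂(P.withDensity fun θ =>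
              ENNReal.ofReal (ψ θ ^ (l - 1) / ∫ θ', ψ θ' ^ (l - 1) ∂P))) *
          (∫⁻ θ, ((P.withDensity fun θ =>
              ENNReal.ofReal (ψ θ ^ (l - 1) / ∫ θ', ψ θ' ^ (l - 1) ∂P)).rnDeriv P θ)
                ^ (l / (l - 1)) ∂P) ^ ((1 - l) / l)
        = ENNReal.ofReal ((∫ θ, ψ θ ^ l ∂P) ^ (1 / l)) := by
  obtain ⟨M₀, hM₀⟩ := hψbdd
  set M := max M₀ c with hMdef
  have hcM : c ≤ M := le_max_right _ _
  have hψM : ∀ θ, ψ θ ≤ M := fun θ => le_max_of_le_left ((le_abs_self _).trans (hM₀ θ))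
  have hψpos : ∀ θ, 0 < ψ θ := fun θ => hc.trans_le (hcψ θ)
  have hl0 : l ≠ 0 := hl.ne
  have hl1 : l - 1 < 0 := by linarith
  have hl1' : l - 1 ≠ 0 := hl1.ne
  set Z := ∫ θ', ψ θ' ^ (l - 1) ∂P with hZdef
  set I := ∫ θ, ψ θ ^ l ∂P with hIdef
  have hZint : Integrable (fun θ => ψ θ ^ (l - 1)) P := stmt9_integrable hψmeas hc hcψ hψM _
  have hZpos : 0 < Z := stmt9_pos hψmeas hc hcM hcψ hψM _
  have hIint : Integrable (fun θ => ψ θ ^ l) P := stmt9_integrable hψmeas hc hcψ hψM _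
  have hIpos : 0 < I := stmt9_pos hψmeas hc hcM hcψ hψM _
  set g : S → ℝ≥0∞ := fun θ => ENNReal.ofReal (ψ θ ^ (l - 1) / Z) with hgdef
  have hgmeas : Measurable g := ((hψmeas.pow measurable_const).div_const Z).ennreal_ofReal
  have hgint : Integrable (fun θ => ψ θ ^ (l - 1) / Z) P := hZint.div_const Z
  have hgnn : ∀ θ, 0 ≤ ψ θ ^ (l - 1) / Z :=
    fun θ => div_nonneg (Real.rpow_nonneg (hψpos θ).le _) hZpos.le
  have hlint_g : ∫⁻ θ, g θ ∂P = 1 := by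
    rw [hgdef]
    simp only []
    rw [stmt9_lint hgint hgnn, integral_div, ← hZdef, div_self hZpos.ne', ENNReal.ofReal_one]
  have hprob : IsProbabilityMeasure (P.withDensity g) := by
    constructor
    rw [withDensity_apply _ MeasurableSet.univ, Measure.restrict_univ]
    exact hlint_g
  haveI := hprob
  have hac : P.withDensity g ≪ P := withDensity_absolutelyContinuous P g
  have hrn : (P.withDensity g).rnDeriv P =ᵐ[P] g := Measure.rnDeriv_withDensity P hgmeas
  set p := l / (l - 1) with hp_def
  -- first factor
  have hψQint : Integrable ψ (P.withDensity g) :=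
    (integrable_const M).mono' hψmeas.aestronglyMeasurable
      (ae_of_all _ fun θ => by rw [Real.norm_eq_abs, abs_of_pos (hψpos θ)]; exact hψM θ)
  have hpt1 : ∀ θ, ψ θ ^ (l - 1) / Z * ψ θ = ψ θ ^ l / Z := by
    intro θ
    rw [div_mul_eq_mul_div]
    congr 1
    rw [← Real.rpow_add_one (hψpos θ).ne' (l - 1), sub_add_cancel]
  have T1 : ENNReal.ofReal (∫ θ, ψ θ ∂(P.withDensity g)) = ENNReal.ofReal (I / Z) := by
    rw [MeasureTheory.ofReal_integral_eq_lintegral_ofReal hψQint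
        (ae_of_all _ fun θ => (hψpos θ).le),
      lintegral_withDensity_eq_lintegral_mul P hgmeas hψmeas.ennreal_ofReal]
    have : ∀ θ, (g * fun θ => ENNReal.ofReal (ψ θ)) θ
        = ENNReal.ofReal (ψ θ ^ l / Z) := by
      intro θ
      simp only [Pi.mul_apply, hgdef]
      rw [← ENNReal.ofReal_mul (hgnn θ), hpt1 θ]
    rw [lintegral_congr this, stmt9_lint (hIint.div_const Z)
      (fun θ => div_nonneg (Real.rpow_nonneg (hψpos θ).le _) hZpos.le),
      integral_div, ← hIdef]
  -- second factor
  have hlp : (l - 1) * p = l := by rw [hp_def, mul_comm]; exact div_mul_cancel₀ l hl1'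
  have T2 : ∫⁻ θ, ((P.withDensity g).rnDeriv P θ) ^ p ∂P
      = ENNReal.ofReal (I / Z ^ p) := by
    rw [lintegral_congr_ae (hrn.mono fun θ h => by rw [h])]
    have : ∀ θ, g θ ^ p = ENNReal.ofReal (ψ θ ^ l / Z ^ p) := by
      intro θ
      rw [hgdef]
      simp only []
      rw [ENNReal.ofReal_rpow_of_pos (div_pos (Real.rpow_pos_of_pos (hψpos θ) _) hZpos),
        Real.div_rpow (Real.rpow_nonneg (hψpos θ).le _) hZpos.le,
        ← Real.rpow_mul (hψpos θ).le, hlp]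
    rw [lintegral_congr this, stmt9_lint ((stmt9_integrable hψmeas hc hcψ hψM l).div_const _)
      (fun θ => div_nonneg (Real.rpow_nonneg (hψpos θ).le _)
        (Real.rpow_nonneg hZpos.le _)), integral_div, ← hIdef]
  -- value at the optimal measure
  have hstar : ENNReal.ofReal (∫ θ, ψ θ ∂(P.withDensity g)) *
      (∫⁻ θ, ((P.withDensity g).rnDeriv P θ) ^ p ∂P) ^ ((1 - l) / l)
      = ENNReal.ofReal (I ^ (1 / l)) := by
    rw [T1, T2,
      ENNReal.ofReal_rpow_of_pos (div_pos hIpos (Real.rpow_pos_of_pos hZpos _)),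
      ← ENNReal.ofReal_mul (div_nonneg hIpos.le hZpos.le)]
    congr 1
    rw [Real.div_rpow hIpos.le (Real.rpow_nonneg hZpos.le _),
      ← Real.rpow_mul hZpos.le]
    have hpq : p * ((1 - l) / l) = -1 := by rw [hp_def]; field_simp [hl0, hl1']; ring
    rw [hpq, Real.rpow_neg_one]
    have h1q : (1 : ℝ) / l = 1 + (1 - l) / l := by field_simp; ring
    rw [h1q, Real.rpow_add hIpos, Real.rpow_one]
    field_simp
  refine ⟨?_, hprob, hac, hstar⟩
  refine le_antisymm ?_ ?_
  · exact le_iInf fun Q => stmt9_key P hl hψmeas hc hcM hcψ hψM Q.1 Q.2.1 Q.2.2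
  · exact (iInf_le _ ⟨P.withDensity g, hprob, hac⟩).trans_eq hstar
end

section
/- Let (S, Σ, 𝒫) be a probability space and ψ: S → ℝ a bounded measurable function with inf_S ψ > 0. Then exp( ∫_S log ψ d𝒫 ) = inf { ( ∫_S ψ dQ ) · exp( −∫_S log(dQ/d𝒫) d𝒫 ) : Q a probability measure on (S,Σ) with Q ≪ 𝒫 }. The infimum is attained at the measure dQ* = ψ^{−1} d𝒫 / ∫_S ψ^{−1} d𝒫. -/
open MeasureTheory ProbabilityTheory Real
open scoped ENNReal NNReal

/-- The nonnegative part of an extended real, valued in `ℝ≥0∞`. -/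
noncomputable def erealPos (x : EReal) : ENNReal :=
  open scoped Classical in
  if x = ⊤ then ⊤ else ENNReal.ofReal x.toReal

/-- The integral of an `EReal`-valued function, defined as the difference of the lower
integrals of its positive and negative parts. -/
noncomputable def erealIntegral {α : Type*} [MeasurableSpace α] (μ : Measure α)
    (g : α → EReal) : EReal :=
  ((∫⁻ a, erealPos (g a) ∂μ : ENNReal) : EReal) - ((∫⁻ a, erealPos (-g a) ∂μ : ENNReal) : EReal)


lemma erealPos_coe (r : ℝ) : erealPos (r : EReal) = ENNReal.ofReal r := by
  simp [erealPos]

lemma coe_ennreal_eq_toReal {x : ℝ≥0∞} (hx : x ≠ ⊤) : (x : EReal) = ((x.toReal : ℝ) : EReal) := by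
  conv_lhs => rw [← ENNReal.ofReal_toReal hx]
  rw [EReal.coe_ennreal_ofReal, max_eq_left ENNReal.toReal_nonneg]

lemma ofReal_le_nnnorm (r : ℝ) : ENNReal.ofReal r ≤ (‖r‖₊ : ℝ≥0∞) := by
  rw [← enorm_eq_nnnorm, ← ofReal_norm, Real.norm_eq_abs]
  exact ENNReal.ofReal_le_ofReal (le_abs_self r)

lemma erealIntegral_of_ae {α : Type*} [MeasurableSpace α] (μ : Measure α) {g : α → EReal}
    {h : α → ℝ} (hg : g =ᵐ[μ] fun a => (h a : EReal)) (hint : Integrable h μ) :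
    erealIntegral μ g = ((∫ a, h a ∂μ : ℝ) : EReal) := by
  have hA : ∫⁻ a, erealPos (g a) ∂μ = ∫⁻ a, ENNReal.ofReal (h a) ∂μ :=
    lintegral_congr_ae (hg.mono fun a ha => by simp only [ha, erealPos_coe])
  have hB : ∫⁻ a, erealPos (-g a) ∂μ = ∫⁻ a, ENNReal.ofReal (-h a) ∂μ :=
    lintegral_congr_ae (hg.mono fun a ha => by simp only [ha, ← EReal.coe_neg, erealPos_coe])
  have hAfin : ∫⁻ a, ENNReal.ofReal (h a) ∂μ ≠ ⊤ :=
    (lt_of_le_of_lt (lintegral_mono fun a => ofReal_le_nnnorm (h a)) hint.hasFiniteIntegral).ne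
  have hBfin : ∫⁻ a, ENNReal.ofReal (-h a) ∂μ ≠ ⊤ :=
    (lt_of_le_of_lt (lintegral_mono fun a => by
      have := ofReal_le_nnnorm (-h a); rw [nnnorm_neg] at this; exact this) hint.hasFiniteIntegral).ne
  rw [erealIntegral, hA, hB, coe_ennreal_eq_toReal hAfin, coe_ennreal_eq_toReal hBfin,
    ← EReal.coe_sub, integral_eq_lintegral_pos_part_sub_lintegral_neg_part hint]

lemma erealPos_log_le (x : ℝ≥0∞) : erealPos (ENNReal.log x) ≤ x := by
  rcases eq_or_ne x ⊤ with rfl | hx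
  · simp [erealPos]
  rcases eq_or_ne x 0 with rfl | hx0
  · simp [erealPos]
  · rw [ENNReal.log_pos_real hx0 hx, erealPos_coe]
    calc ENNReal.ofReal (Real.log x.toReal)
        ≤ ENNReal.ofReal x.toReal := ENNReal.ofReal_le_ofReal (Real.log_le_self ENNReal.toReal_nonneg)
      _ = x := ENNReal.ofReal_toReal hx

lemma integrable_of_bounds {α : Type*} [MeasurableSpace α] {μ : Measure α} [IsFiniteMeasure μ]
    {h : α → ℝ} (hm : AEStronglyMeasurable h μ) {a b : ℝ} (hla : ∀ θ, a ≤ h θ)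
    (hlb : ∀ θ, h θ ≤ b) : Integrable h μ := by
  refine Integrable.mono' (integrable_const (max |a| |b|)) hm (ae_of_all _ fun θ => ?_)
  rw [Real.norm_eq_abs, abs_le]
  constructor
  · calc -(max |a| |b|) ≤ -|a| := neg_le_neg (le_max_left _ _)
      _ ≤ a := neg_abs_le a
      _ ≤ h θ := hla θ
  · exact (hlb θ).trans ((le_abs_self b).trans (le_max_right _ _))

/-- dual representation of the logarithmic ambiguity function.
For a probability measure `P` and a bounded measurable `ψ` with `inf ψ > 0`,
`exp(∫ log ψ dP) = inf { (∫ ψ dQ)·exp(−∫ log(dQ/dP) dP) : Q probability, Q ≪ P }`,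
where `log(dQ/dP)` takes values in `[−∞,∞)` and the penalty `exp(−∫ log(dQ/dP) dP)` is
read in `ℝ≥0∞`.  The infimum is attained at `dQ* = ψ⁻¹ dP / ∫ ψ⁻¹ dP`. -/
theorem stmt_10
    {S : Type*} [MeasurableSpace S] (P : Measure S) [IsProbabilityMeasure P]
    (ψ : S → ℝ) (hψmeas : Measurable ψ) (hψbdd : ∃ M, ∀ θ, |ψ θ| ≤ M)
    (c : ℝ) (hc : 0 < c) (hcψ : ∀ θ, c ≤ ψ θ) :
    (ENNReal.ofReal (exp (∫ θ, log (ψ θ) ∂P))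
        = ⨅ Q : {Q : Measure S // IsProbabilityMeasure Q ∧ Q ≪ P},
            (ENNReal.ofReal (∫ θ, ψ θ ∂(Q : Measure S)) *
              EReal.exp
                (-(erealIntegral P fun θ => ENNReal.log ((Q : Measure S).rnDeriv P θ))))) ∧
      IsProbabilityMeasure
        (P.withDensity fun θ => ENNReal.ofReal ((ψ θ)⁻¹ / ∫ θ', (ψ θ')⁻¹ ∂P)) ∧
      (P.withDensity fun θ => ENNReal.ofReal ((ψ θ)⁻¹ / ∫ θ', (ψ θ')⁻¹ ∂P)) ≪ P ∧
      ENNReal.ofReal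
            (∫ θ, ψ θ ∂(P.withDensity fun θ =>
              ENNReal.ofReal ((ψ θ)⁻¹ / ∫ θ', (ψ θ')⁻¹ ∂P))) *
          EReal.exp
            (-(erealIntegral P fun θ =>
              ENNReal.log ((P.withDensity fun θ =>
                ENNReal.ofReal ((ψ θ)⁻¹ / ∫ θ', (ψ θ')⁻¹ ∂P)).rnDeriv P θ)))
        = ENNReal.ofReal (exp (∫ θ, log (ψ θ) ∂P)) := by
  obtain ⟨M, hM⟩ := hψbdd
  have hψpos : ∀ θ, 0 < ψ θ := fun θ => lt_of_lt_of_le hc (hcψ θ)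
  have hψle : ∀ θ, ψ θ ≤ M := fun θ => (le_abs_self _).trans (hM θ)
  have hSne : Nonempty S := by
    rcases isEmpty_or_nonempty S with hS | hS
    · have h1 := measure_univ (μ := P)
      rw [Set.univ_eq_empty_iff.mpr hS, measure_empty] at h1
      exact absurd h1 (by norm_num)
    · exact hS
  have hM0 : 0 < M := lt_of_lt_of_le (hψpos hSne.some) (hψle hSne.some)
  set L := ∫ θ, log (ψ θ) ∂P with hLdef
  have hlogψint : Integrable (fun θ => log (ψ θ)) P :=
    integrable_of_bounds (Real.measurable_log.comp hψmeas).aestronglyMeasurable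
      (a := log c) (b := log M)
      (fun θ => Real.log_le_log hc (hcψ θ)) (fun θ => Real.log_le_log (hψpos θ) (hψle θ))
  -- the inverse function and its normalization
  have hinvlb : ∀ θ, M⁻¹ ≤ (ψ θ)⁻¹ := fun θ => inv_anti₀ (hψpos θ) (hψle θ)
  have hinvub : ∀ θ, (ψ θ)⁻¹ ≤ c⁻¹ := fun θ => inv_anti₀ hc (hcψ θ)
  have hinvint : Integrable (fun θ => (ψ θ)⁻¹) P :=
    integrable_of_bounds hψmeas.inv.aestronglyMeasurable hinvlb hinvub
  set Z := ∫ θ', (ψ θ')⁻¹ ∂P with hZdef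
  have hZlb : M⁻¹ ≤ Z := by
    calc M⁻¹ = ∫ _θ, M⁻¹ ∂P := by simp
      _ ≤ Z := integral_mono (integrable_const _) hinvint hinvlb
  have hZpos : 0 < Z := lt_of_lt_of_le (inv_pos.mpr hM0) hZlb
  set d := fun θ => (ψ θ)⁻¹ / Z with hddef
  have hdpos : ∀ θ, 0 < d θ := fun θ => div_pos (inv_pos.mpr (hψpos θ)) hZpos
  have hdmeas : Measurable d := hψmeas.inv.div_const Z
  have hdint : Integrable d P := hinvint.div_const Z
  set Qs := P.withDensity fun θ => ENNReal.ofReal (d θ) with hQsdef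
  have h2 : IsProbabilityMeasure Qs := by
    constructor
    rw [hQsdef, withDensity_apply _ MeasurableSet.univ, Measure.restrict_univ,
      ← ofReal_integral_eq_lintegral_ofReal hdint (ae_of_all _ fun θ => (hdpos θ).le)]
    have : ∫ θ, d θ ∂P = 1 := by
      rw [hddef]
      rw [integral_div, ← hZdef, div_self hZpos.ne']
    rw [this, ENNReal.ofReal_one]
  have h3 : Qs ≪ P := withDensity_absolutelyContinuous P _
  -- value at the minimizer
  have h4 : ENNReal.ofReal (∫ θ, ψ θ ∂Qs) *
      EReal.exp (-(erealIntegral P fun θ => ENNReal.log (Qs.rnDeriv P θ)))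
      = ENNReal.ofReal (exp L) := by
    have hrn : Qs.rnDeriv P =ᵐ[P] fun θ => ENNReal.ofReal (d θ) :=
      Measure.rnDeriv_withDensity P hdmeas.ennreal_ofReal
    have hlog : (fun θ => ENNReal.log (Qs.rnDeriv P θ)) =ᵐ[P] fun θ => ((log (d θ) : ℝ) : EReal) :=
      hrn.mono fun θ hθ => by simp only [hθ, ENNReal.log_ofReal_of_pos (hdpos θ)]
    have hlogd : (fun θ => log (d θ)) = fun θ => -log (ψ θ) - log Z := by
      funext θ
      rw [hddef, log_div (inv_ne_zero (hψpos θ).ne') hZpos.ne', log_inv]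
    have hlogdint : Integrable (fun θ => log (d θ)) P := by
      rw [hlogd]; exact hlogψint.neg.sub (integrable_const _)
    have hIval : ∫ θ, log (d θ) ∂P = -L - log Z := by
      rw [hlogd, integral_sub hlogψint.neg' (integrable_const _), integral_neg, integral_const]
      simp [hLdef]
    have hI : erealIntegral P (fun θ => ENNReal.log (Qs.rnDeriv P θ)) = ((-L - log Z : ℝ) : EReal) := by
      rw [erealIntegral_of_ae P hlog hlogdint, hIval]
    have hψQs : ∫ θ, ψ θ ∂Qs = Z⁻¹ := by
      rw [hQsdef]
      rw [show (fun θ => ENNReal.ofReal (d θ)) = fun θ => ((Real.toNNReal (d θ) : ℝ≥0) : ℝ≥0∞) from rfl,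
        integral_withDensity_eq_integral_smul hdmeas.real_toNNReal ψ]
      have : ∀ θ, Real.toNNReal (d θ) • ψ θ = Z⁻¹ := by
        intro θ
        rw [NNReal.smul_def, smul_eq_mul, Real.coe_toNNReal _ (hdpos θ).le, hddef]
        rw [div_mul_eq_mul_div, inv_mul_cancel₀ (hψpos θ).ne', one_div]
      simp only [this]
      simp
    rw [hI, hψQs, ← EReal.coe_neg, EReal.exp_coe, ← ENNReal.ofReal_mul (by positivity)]
    congr 1
    rw [neg_sub' , sub_neg_eq_add]
    rw [Real.exp_add, Real.exp_log hZpos]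
    field_simp [mul_comm]
  refine ⟨le_antisymm ?_ (iInf_le_of_le ⟨Qs, h2, h3⟩ h4.le), h2, h3, h4⟩
  -- lower bound: Jensen
  refine le_iInf ?_
  rintro ⟨Q, hQprob, hQP⟩
  haveI := hQprob
  show ENNReal.ofReal (exp L) ≤ ENNReal.ofReal (∫ θ, ψ θ ∂Q) *
    EReal.exp (-(erealIntegral P fun θ => ENNReal.log (Q.rnDeriv P θ)))
  have hψQint : Integrable ψ Q := integrable_of_bounds hψmeas.aestronglyMeasurable hcψ hψle
  set m := ∫ θ, ψ θ ∂Q with hmdef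
  have hm : c ≤ m := by
    calc c = ∫ _θ, c ∂Q := by simp
      _ ≤ m := integral_mono (integrable_const _) hψQint hcψ
  have hmpos : 0 < m := lt_of_lt_of_le hc hm
  set f := Q.rnDeriv P with hfdef
  have hA_le : ∫⁻ θ, erealPos (ENNReal.log (f θ)) ∂P ≤ 1 := by
    calc ∫⁻ θ, erealPos (ENNReal.log (f θ)) ∂P ≤ ∫⁻ θ, f θ ∂P :=
          lintegral_mono fun θ => erealPos_log_le (f θ)
      _ = Q Set.univ := Measure.lintegral_rnDeriv hQP
      _ = 1 := measure_univ
  by_cases hB : ∫⁻ θ, erealPos (-(ENNReal.log (f θ))) ∂P = ⊤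
  · have hbot : erealIntegral P (fun θ => ENNReal.log (f θ)) = ⊥ := by
      rw [erealIntegral, hB]
      simp [EReal.coe_ennreal_top]
    rw [hbot]
    simp only [EReal.neg_bot, EReal.exp_top]
    rw [ENNReal.mul_top (ENNReal.ofReal_pos.mpr hmpos).ne']
    exact le_top
  · -- B finite: rnDeriv positive a.e.
    push_neg at hB
    have hfmeas : Measurable f := Measure.measurable_rnDeriv Q P
    have hfz : ∀ᵐ θ ∂P, f θ ≠ 0 := by
      have hs : MeasurableSet {θ | f θ = 0} := hfmeas (measurableSet_singleton 0)
      have hP0 : P {θ | f θ = 0} = 0 := by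
        by_contra hpos
        apply hB
        refine top_unique ?_
        calc (⊤ : ℝ≥0∞) = ⊤ * P {θ | f θ = 0} := (ENNReal.top_mul hpos).symm
          _ = ∫⁻ θ in {θ | f θ = 0}, ⊤ ∂P := by rw [setLIntegral_const]
          _ = ∫⁻ θ in {θ | f θ = 0}, erealPos (-(ENNReal.log (f θ))) ∂P := by
              refine (setLIntegral_congr_fun hs (fun θ hθ => ?_)).symm
              have : f θ = 0 := hθ
              simp [this, erealPos]
          _ ≤ ∫⁻ θ, erealPos (-(ENNReal.log (f θ))) ∂P := setLIntegral_le_lintegral _ _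
      rw [ae_iff]
      simpa using hP0
    have hflt : ∀ᵐ θ ∂P, f θ < ⊤ := Measure.rnDeriv_lt_top Q P
    set φ := fun θ => Real.log ((f θ).toReal) with hφdef
    have hg : (fun θ => ENNReal.log (f θ)) =ᵐ[P] fun θ => ((φ θ : ℝ) : EReal) := by
      filter_upwards [hfz, hflt] with θ h0 hlt
      rw [ENNReal.log_pos_real h0 hlt.ne]
    have hφmeas : Measurable φ := Real.measurable_log.comp hfmeas.ennreal_toReal
    have hAeq : ∫⁻ θ, ENNReal.ofReal (φ θ) ∂P = ∫⁻ θ, erealPos (ENNReal.log (f θ)) ∂P :=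
      (lintegral_congr_ae (hg.mono fun θ hθ => by simp only [hθ, erealPos_coe])).symm
    have hBeq : ∫⁻ θ, ENNReal.ofReal (-φ θ) ∂P = ∫⁻ θ, erealPos (-(ENNReal.log (f θ))) ∂P :=
      (lintegral_congr_ae (hg.mono fun θ hθ => by
        simp only [hθ, ← EReal.coe_neg, erealPos_coe])).symm
    have hφint : Integrable φ P := by
      refine ⟨hφmeas.aestronglyMeasurable, ?_⟩
      have hle : ∀ θ, (‖φ θ‖₊ : ℝ≥0∞) ≤ ENNReal.ofReal (φ θ) + ENNReal.ofReal (-φ θ) := by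
        intro θ
        rw [← enorm_eq_nnnorm, ← ofReal_norm, Real.norm_eq_abs]
        rcases le_total 0 (φ θ) with h | h
        · rw [abs_of_nonneg h]; exact le_self_add
        · rw [abs_of_nonpos h]; exact le_add_self
      calc ∫⁻ θ, (‖φ θ‖₊ : ℝ≥0∞) ∂P
          ≤ ∫⁻ θ, (ENNReal.ofReal (φ θ) + ENNReal.ofReal (-φ θ)) ∂P := lintegral_mono hle
        _ = (∫⁻ θ, ENNReal.ofReal (φ θ) ∂P) + ∫⁻ θ, ENNReal.ofReal (-φ θ) ∂P :=
            lintegral_add_left (hφmeas.ennreal_ofReal) _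
        _ < ⊤ := by
            rw [hAeq, hBeq]
            exact ENNReal.add_lt_top.mpr ⟨lt_of_le_of_lt hA_le (by norm_num), hB.lt_top⟩
    set I := ∫ θ, φ θ ∂P with hIdef
    have hIeq : erealIntegral P (fun θ => ENNReal.log (f θ)) = ((I : ℝ) : EReal) :=
      erealIntegral_of_ae P hg hφint
    rw [hIeq, ← EReal.coe_neg, EReal.exp_coe, ← ENNReal.ofReal_mul (hc.le.trans hm)]
    refine ENNReal.ofReal_le_ofReal ?_
    -- Jensen's inequality
    have hprod_int : Integrable (fun θ => (f θ).toReal * ψ θ) P := by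
      simpa [smul_eq_mul] using (integrable_rnDeriv_smul_iff hQP).mpr hψQint
    have hint_m : ∫ θ, (f θ).toReal * ψ θ ∂P = m := by
      simpa [smul_eq_mul] using integral_rnDeriv_smul hQP (f := ψ)
    have key : L + I ≤ log m := by
      have hpt : ∀ᵐ θ ∂P, log (ψ θ) + φ θ ≤ log m + ((f θ).toReal * ψ θ)/m - 1 := by
        filter_upwards [hfz, hflt] with θ h0 hlt
        have hft : 0 < (f θ).toReal := ENNReal.toReal_pos h0 hlt.ne
        have hx : 0 < (f θ).toReal * ψ θ := mul_pos hft (hψpos θ)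
        have h1 := Real.log_le_sub_one_of_pos (div_pos hx hmpos)
        rw [log_div hx.ne' hmpos.ne'] at h1
        have h2 : log ((f θ).toReal * ψ θ) = φ θ + log (ψ θ) := Real.log_mul hft.ne' (hψpos θ).ne'
        linarith
      calc L + I = ∫ θ, (log (ψ θ) + φ θ) ∂P := (integral_add hlogψint hφint).symm
        _ ≤ ∫ θ, (log m + ((f θ).toReal * ψ θ)/m - 1) ∂P := by
            have hi1 : Integrable (fun θ => log m + (f θ).toReal * ψ θ / m) P := by
              simpa using (integrable_const (log m)).add (hprod_int.div_const m)
            have hi2 : Integrable (fun θ => log m + (f θ).toReal * ψ θ / m - 1) P := by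
              exact hi1.sub (integrable_const 1)
            have hi3 : Integrable (fun θ => log (ψ θ) + φ θ) P := by
              exact hlogψint.add hφint
            exact integral_mono_ae hi3 hi2 hpt
        _ = log m := by
            have hi1 : Integrable (fun θ => log m + (f θ).toReal * ψ θ / m) P := by
              simpa using (integrable_const (log m)).add (hprod_int.div_const m)
            rw [integral_sub hi1 (integrable_const 1),
              integral_add (integrable_const (log m)) (hprod_int.div_const m),
              integral_div, hint_m, integral_const, integral_const]
            simp [div_self hmpos.ne']
    calc exp L = exp (L + I) * exp (-I) := by rw [← Real.exp_add]; ring_nf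
      _ ≤ exp (log m) * exp (-I) := by
          gcongr <;> linarith [key]
      _ = m * exp (-I) := by rw [Real.exp_log hmpos]
end

section
/- Let T > 0, σ > 0, θ_min ≤ θ_max, and let W be a centered real Gaussian random variable with variance T. For θ ∈ ℝ set D^θ := exp( (θ/σ) W − θ²T/(2σ²) ). Then for any h > 0 and any θ₁, θ₂ ∈ [θ_min, θ_max] with |θ₁ − θ₂| ≤ h, E[ (D^{θ₁} − D^{θ₂})² ] ≤ (2hT/σ²) · max_{θ ∈ [θ_min, θ_max]} |θ| e^{θ²T/σ²}; in particular, sup{ E[(D^{θ₁}−D^{θ₂})²] : θ₁,θ₂ ∈ [θ_min,θ_max], |θ₁−θ₂| ≤ h } = O(h) as h → 0. -/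
open MeasureTheory ProbabilityTheory Real Set
open scoped NNReal ENNReal

lemma aux_integral_gaussianReal (μ : ℝ) {v : ℝ≥0} (hv : v ≠ 0) (g : ℝ → ℝ) :
    ∫ x, g x ∂(gaussianReal μ v) = ∫ x, gaussianPDFReal μ v x * g x := by
  rw [gaussianReal_of_var_ne_zero _ hv, gaussianPDF_def]
  have h : (fun x => ENNReal.ofReal (gaussianPDFReal μ v x))
      = fun x => (((gaussianPDFReal μ v x).toNNReal : ℝ≥0) : ℝ≥0∞) := rfl
  rw [h, integral_withDensity_eq_integral_smul ((measurable_gaussianPDFReal μ v).real_toNNReal)]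
  congr 1
  ext x
  rw [NNReal.smul_def, smul_eq_mul, Real.coe_toNNReal _ (gaussianPDFReal_nonneg μ v x)]

lemma aux_pdf_mul_exp {T : ℝ} (hT : 0 < T) (t b x : ℝ) :
    gaussianPDFReal 0 ⟨T, hT.le⟩ x * exp (t * x - b)
      = exp (T * t ^ 2 / 2 - b) * gaussianPDFReal (T * t) ⟨T, hT.le⟩ x := by
  have hT' : T ≠ 0 := hT.ne'
  have h : exp (t * x - b) * exp (-(x - 0) ^ 2 / (2 * T))
      = exp (T * t ^ 2 / 2 - b) * exp (-(x - T * t) ^ 2 / (2 * T)) := by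
    rw [← exp_add, ← exp_add]
    congr 1
    field_simp
    ring
  show (√(2 * π * T))⁻¹ * exp (-(x - 0) ^ 2 / (2 * T)) * exp (t * x - b)
    = exp (T * t ^ 2 / 2 - b) * ((√(2 * π * T))⁻¹ * exp (-(x - T * t) ^ 2 / (2 * T)))
  linear_combination (√(2 * π * T))⁻¹ * h

lemma aux_sq_sub_exp (u w : ℝ) :
    (exp u - exp w) ^ 2 = exp (u + u) - 2 * exp (u + w) + exp (w + w) := by
  rw [exp_add, exp_add, exp_add]; ring

lemma aux_exp_sub_exp_le (x y : ℝ) : exp x - exp y ≤ exp x * (x - y) := by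
  have h1 : exp x - exp y = exp x * (1 - exp (y - x)) := by
    rw [mul_sub, mul_one, ← exp_add]; ring_nf
  rw [h1]
  have h2 : 1 - exp (y - x) ≤ x - y := by
    have := add_one_le_exp (y - x)
    linarith
  exact mul_le_mul_of_nonneg_left h2 (exp_nonneg x)

lemma aux_integral_sq_diff {Ω : Type*} [MeasurableSpace Ω] (P : Measure Ω)
    [IsProbabilityMeasure P] (T σ : ℝ) (hT : 0 < T) (hσ : 0 < σ)
    (W : Ω → ℝ) (hWmeas : Measurable W)
    (hlaw : Measure.map W P = gaussianReal 0 ⟨T, hT.le⟩) (θ₁ θ₂ : ℝ) :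
    ∫ ω, (exp ((θ₁ / σ) * W ω - θ₁ ^ 2 * T / (2 * σ ^ 2))
        - exp ((θ₂ / σ) * W ω - θ₂ ^ 2 * T / (2 * σ ^ 2))) ^ 2 ∂P
      = exp (θ₁ ^ 2 * T / σ ^ 2) - 2 * exp (θ₁ * θ₂ * T / σ ^ 2)
        + exp (θ₂ ^ 2 * T / σ ^ 2) := by
  have hσ' : σ ≠ 0 := hσ.ne'
  have hT' : T ≠ 0 := hT.ne'
  have hv : (⟨T, hT.le⟩ : ℝ≥0) ≠ 0 := by
    intro hcon
    exact hT' (congrArg NNReal.toReal hcon)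
  set F : ℝ → ℝ := fun x => (exp ((θ₁ / σ) * x - θ₁ ^ 2 * T / (2 * σ ^ 2))
      - exp ((θ₂ / σ) * x - θ₂ ^ 2 * T / (2 * σ ^ 2))) ^ 2 with hF
  have hFc : Continuous F := by fun_prop
  have step1 : ∫ ω, F (W ω) ∂P = ∫ x, F x ∂(gaussianReal 0 ⟨T, hT.le⟩) := by
    rw [← hlaw, integral_map hWmeas.aemeasurable hFc.aestronglyMeasurable]
  have step2 : ∫ x, F x ∂(gaussianReal 0 ⟨T, hT.le⟩)
      = ∫ x, gaussianPDFReal 0 ⟨T, hT.le⟩ x * F x := aux_integral_gaussianReal 0 hv F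
  set c₁ : ℝ := exp (T * (2 * (θ₁ / σ)) ^ 2 / 2 - 2 * (θ₁ ^ 2 * T / (2 * σ ^ 2))) with hc₁
  set c₂ : ℝ := exp (T * (θ₁ / σ + θ₂ / σ) ^ 2 / 2
      - (θ₁ ^ 2 * T / (2 * σ ^ 2) + θ₂ ^ 2 * T / (2 * σ ^ 2))) with hc₂
  set c₃ : ℝ := exp (T * (2 * (θ₂ / σ)) ^ 2 / 2 - 2 * (θ₂ ^ 2 * T / (2 * σ ^ 2))) with hc₃
  have key : ∀ x, gaussianPDFReal 0 ⟨T, hT.le⟩ x * F x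
      = c₁ * gaussianPDFReal (T * (2 * (θ₁ / σ))) ⟨T, hT.le⟩ x
        - 2 * (c₂ * gaussianPDFReal (T * (θ₁ / σ + θ₂ / σ)) ⟨T, hT.le⟩ x)
        + c₃ * gaussianPDFReal (T * (2 * (θ₂ / σ))) ⟨T, hT.le⟩ x := by
    intro x
    have e1 := aux_pdf_mul_exp hT (2 * (θ₁ / σ)) (2 * (θ₁ ^ 2 * T / (2 * σ ^ 2))) x
    have e2 := aux_pdf_mul_exp hT (θ₁ / σ + θ₂ / σ)
      (θ₁ ^ 2 * T / (2 * σ ^ 2) + θ₂ ^ 2 * T / (2 * σ ^ 2)) x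
    have e3 := aux_pdf_mul_exp hT (2 * (θ₂ / σ)) (2 * (θ₂ ^ 2 * T / (2 * σ ^ 2))) x
    have g1 : ((θ₁ / σ) * x - θ₁ ^ 2 * T / (2 * σ ^ 2)) + ((θ₁ / σ) * x - θ₁ ^ 2 * T / (2 * σ ^ 2))
        = (2 * (θ₁ / σ)) * x - 2 * (θ₁ ^ 2 * T / (2 * σ ^ 2)) := by ring
    have g2 : ((θ₁ / σ) * x - θ₁ ^ 2 * T / (2 * σ ^ 2)) + ((θ₂ / σ) * x - θ₂ ^ 2 * T / (2 * σ ^ 2))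
        = (θ₁ / σ + θ₂ / σ) * x - (θ₁ ^ 2 * T / (2 * σ ^ 2) + θ₂ ^ 2 * T / (2 * σ ^ 2)) := by
      ring
    have g3 : ((θ₂ / σ) * x - θ₂ ^ 2 * T / (2 * σ ^ 2)) + ((θ₂ / σ) * x - θ₂ ^ 2 * T / (2 * σ ^ 2))
        = (2 * (θ₂ / σ)) * x - 2 * (θ₂ ^ 2 * T / (2 * σ ^ 2)) := by ring
    have hsq : F x = exp ((2 * (θ₁ / σ)) * x - 2 * (θ₁ ^ 2 * T / (2 * σ ^ 2)))
        - 2 * exp ((θ₁ / σ + θ₂ / σ) * x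
            - (θ₁ ^ 2 * T / (2 * σ ^ 2) + θ₂ ^ 2 * T / (2 * σ ^ 2)))
        + exp ((2 * (θ₂ / σ)) * x - 2 * (θ₂ ^ 2 * T / (2 * σ ^ 2))) := by
      simp only [hF]
      rw [aux_sq_sub_exp, g1, g2, g3]
    rw [hsq]
    linear_combination e1 - 2 * e2 + e3
  have iA : Integrable (fun x => c₁ * gaussianPDFReal (T * (2 * (θ₁ / σ))) ⟨T, hT.le⟩ x) :=
    (integrable_gaussianPDFReal _ _).const_mul _
  have iB : Integrable (fun x =>
      2 * (c₂ * gaussianPDFReal (T * (θ₁ / σ + θ₂ / σ)) ⟨T, hT.le⟩ x)) :=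
    ((integrable_gaussianPDFReal _ _).const_mul _).const_mul _
  have iC : Integrable (fun x => c₃ * gaussianPDFReal (T * (2 * (θ₂ / σ))) ⟨T, hT.le⟩ x) :=
    (integrable_gaussianPDFReal _ _).const_mul _
  have iAB : Integrable (fun x => c₁ * gaussianPDFReal (T * (2 * (θ₁ / σ))) ⟨T, hT.le⟩ x
      - 2 * (c₂ * gaussianPDFReal (T * (θ₁ / σ + θ₂ / σ)) ⟨T, hT.le⟩ x)) := iA.sub iB
  have step3 : ∫ x, gaussianPDFReal 0 ⟨T, hT.le⟩ x * F x
      = c₁ - 2 * c₂ + c₃ := by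
    simp_rw [key]
    rw [integral_add iAB iC, integral_sub iA iB, integral_const_mul,
      integral_const_mul, integral_const_mul, integral_const_mul,
      integral_gaussianPDFReal_eq_one _ hv, integral_gaussianPDFReal_eq_one _ hv,
      integral_gaussianPDFReal_eq_one _ hv]
    ring
  have e1 : c₁ = exp (θ₁ ^ 2 * T / σ ^ 2) := by
    rw [hc₁]; congr 1; field_simp; ring
  have e2 : c₂ = exp (θ₁ * θ₂ * T / σ ^ 2) := by
    rw [hc₂]; congr 1; field_simp; ring
  have e3 : c₃ = exp (θ₂ ^ 2 * T / σ ^ 2) := by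
    rw [hc₃]; congr 1; field_simp; ring
  calc ∫ ω, F (W ω) ∂P = c₁ - 2 * c₂ + c₃ := by rw [step1, step2, step3]
    _ = _ := by rw [e1, e2, e3]

/-- For `W ~ N(0,T)` and the densities
`D^θ = exp((θ/σ) W − θ²T/(2σ²))`, for scenarios `θ₁, θ₂ ∈ [θ_min, θ_max]` at distance at most
`h` one has `E[(D^{θ₁} − D^{θ₂})²] ≤ (2hT/σ²) · max_{θ∈[θ_min,θ_max]} |θ| e^{θ²T/σ²}`;
in particular the supremum over such pairs is `O(h)` as `h → 0`. -/
theorem stmt_12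
    {Ω : Type*} [MeasurableSpace Ω] (P : Measure Ω) [IsProbabilityMeasure P]
    (T σ θmin θmax : ℝ) (hT : 0 < T) (hσ : 0 < σ) (hθ : θmin ≤ θmax)
    (W : Ω → ℝ) (hWmeas : Measurable W)
    (hlaw : Measure.map W P = gaussianReal 0 ⟨T, hT.le⟩)
    (D : ℝ → Ω → ℝ)
    (hD : ∀ θ ω, D θ ω = exp ((θ / σ) * W ω - θ ^ 2 * T / (2 * σ ^ 2))) :
    (∀ h > (0:ℝ), ∀ θ₁ ∈ Icc θmin θmax, ∀ θ₂ ∈ Icc θmin θmax, |θ₁ - θ₂| ≤ h →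
      ∫ ω, (D θ₁ ω - D θ₂ ω) ^ 2 ∂P
        ≤ (2 * h * T / σ ^ 2) *
            sSup ((fun θ => |θ| * exp (θ ^ 2 * T / σ ^ 2)) '' Icc θmin θmax)) ∧
    ∃ K : ℝ, ∀ h > (0:ℝ), ∀ θ₁ ∈ Icc θmin θmax, ∀ θ₂ ∈ Icc θmin θmax, |θ₁ - θ₂| ≤ h →
      ∫ ω, (D θ₁ ω - D θ₂ ω) ^ 2 ∂P ≤ K * h := by
  set M : ℝ := sSup ((fun θ => |θ| * exp (θ ^ 2 * T / σ ^ 2)) '' Icc θmin θmax) with hM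
  have hbdd : BddAbove ((fun θ => |θ| * exp (θ ^ 2 * T / σ ^ 2)) '' Icc θmin θmax) := by
    apply (isCompact_Icc.image_of_continuousOn _).bddAbove
    exact (continuous_abs.mul (continuous_exp.comp (by fun_prop))).continuousOn
  have hMmem : ∀ θ ∈ Icc θmin θmax, |θ| * exp (θ ^ 2 * T / σ ^ 2) ≤ M := fun θ hθ' =>
    le_csSup hbdd (mem_image_of_mem _ hθ')
  have main : ∀ h > (0:ℝ), ∀ θ₁ ∈ Icc θmin θmax, ∀ θ₂ ∈ Icc θmin θmax, |θ₁ - θ₂| ≤ h →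
      ∫ ω, (D θ₁ ω - D θ₂ ω) ^ 2 ∂P ≤ (2 * h * T / σ ^ 2) * M := by
    intro h hh θ₁ h1 θ₂ h2 hd
    have hint : ∫ ω, (D θ₁ ω - D θ₂ ω) ^ 2 ∂P
        = exp (θ₁ ^ 2 * T / σ ^ 2) - 2 * exp (θ₁ * θ₂ * T / σ ^ 2)
          + exp (θ₂ ^ 2 * T / σ ^ 2) := by
      simp_rw [hD]
      exact aux_integral_sq_diff P T σ hT hσ W hWmeas hlaw θ₁ θ₂
    have hbound : ∀ a b : ℝ, a ∈ Icc θmin θmax → |a - b| ≤ h →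
        exp (a ^ 2 * T / σ ^ 2) - exp (a * b * T / σ ^ 2) ≤ M * (h * T / σ ^ 2) := by
      intro a b ha hab
      calc exp (a ^ 2 * T / σ ^ 2) - exp (a * b * T / σ ^ 2)
          ≤ exp (a ^ 2 * T / σ ^ 2) * (a ^ 2 * T / σ ^ 2 - a * b * T / σ ^ 2) :=
            aux_exp_sub_exp_le _ _
        _ = exp (a ^ 2 * T / σ ^ 2) * (a * (a - b)) * (T / σ ^ 2) := by ring
        _ ≤ exp (a ^ 2 * T / σ ^ 2) * (|a| * h) * (T / σ ^ 2) := by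
            have h1' : a * (a - b) ≤ |a| * h := by
              calc a * (a - b) ≤ |a * (a - b)| := le_abs_self _
                _ = |a| * |a - b| := abs_mul _ _
                _ ≤ |a| * h := mul_le_mul_of_nonneg_left hab (abs_nonneg a)
            have h3' := mul_le_mul_of_nonneg_left h1' (exp_nonneg (a ^ 2 * T / σ ^ 2))
            have h2' : (0:ℝ) ≤ T / σ ^ 2 := by positivity
            nlinarith [h3', h2']
        _ = (|a| * exp (a ^ 2 * T / σ ^ 2)) * (h * T / σ ^ 2) := by ring
        _ ≤ M * (h * T / σ ^ 2) := by
            have hn : (0:ℝ) ≤ h * T / σ ^ 2 := by positivity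
            exact mul_le_mul_of_nonneg_right (hMmem a ha) hn
    have t1 := hbound θ₁ θ₂ h1 hd
    have t2 := hbound θ₂ θ₁ h2 (by rwa [abs_sub_comm])
    have hcomm : θ₂ * θ₁ * T / σ ^ 2 = θ₁ * θ₂ * T / σ ^ 2 := by ring
    rw [hcomm] at t2
    rw [hint]
    calc exp (θ₁ ^ 2 * T / σ ^ 2) - 2 * exp (θ₁ * θ₂ * T / σ ^ 2) + exp (θ₂ ^ 2 * T / σ ^ 2)
        = (exp (θ₁ ^ 2 * T / σ ^ 2) - exp (θ₁ * θ₂ * T / σ ^ 2))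
          + (exp (θ₂ ^ 2 * T / σ ^ 2) - exp (θ₁ * θ₂ * T / σ ^ 2)) := by ring
      _ ≤ M * (h * T / σ ^ 2) + M * (h * T / σ ^ 2) := add_le_add t1 t2
      _ = (2 * h * T / σ ^ 2) * M := by ring
  refine ⟨main, ⟨2 * T / σ ^ 2 * M, ?_⟩⟩
  intro h hh θ₁ h1 θ₂ h2 hd
  calc ∫ ω, (D θ₁ ω - D θ₂ ω) ^ 2 ∂P ≤ (2 * h * T / σ ^ 2) * M := main h hh θ₁ h1 θ₂ h2 hd
    _ = (2 * T / σ ^ 2 * M) * h := by ring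
end
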